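/- Let x(t) be the solution of ẏ = f(y) + q·B·y and x_λ(t) the solution of ẋ = f(x) + p(t/λ)·B·x with the same initial condition, where f is L-Lipschitz, ‖B‖ ≤ b, p is bounded by P̄, T_0-periodic with mean q, and all solutions stay in a ball of radius R on [0,T]. Then for t ∈ [0,T], ‖x_λ(t) − x(t)‖ ≤ C·λ for a constant C depending only on L, b, P̄, R, T, T_0 (first-order averaging estimate). -/

import Mathlib

open intervalIntegral MeasureTheory

open Set MeasureTheory in
private lemma gron_aux {K ε T x : ℝ} (hK : 0 ≤ K) (hε : 0 ≤ ε) (hx0 : 0 ≤ x) (hxT : x ≤ T) :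
    gronwallBound 0 K ε x ≤ ε * T * Real.exp (K * T) := by
  have hT0 : 0 ≤ T := le_trans hx0 hxT
  have hexp1 : (1:ℝ) ≤ Real.exp (K * T) := by
    rw [← Real.exp_zero]; exact Real.exp_le_exp.2 (by positivity)
  rcases eq_or_lt_of_le hK with h0 | hKpos
  · rw [← h0, gronwallBound_K0]
    simp only [zero_add, zero_mul, Real.exp_zero] at *
    nlinarith [mul_le_mul_of_nonneg_left hxT hε]
  · rw [gronwallBound_of_K_ne_0 hKpos.ne']
    have h2 : 0 < Real.exp (K*x) := Real.exp_pos _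
    have key : Real.exp (K * x) - 1 ≤ K * x * Real.exp (K * x) := by
      have h1 : 1 + (-(K*x)) ≤ Real.exp (-(K*x)) := by
        have := Real.add_one_le_exp (-(K*x)); linarith
      have h3 : Real.exp (K*x) * Real.exp (-(K*x)) = 1 := by
        rw [← Real.exp_add]; simp
      nlinarith
    have hxe : K * x * Real.exp (K*x) ≤ K * T * Real.exp (K*T) := by
      have h4 : Real.exp (K*x) ≤ Real.exp (K*T) := Real.exp_le_exp.2 (by nlinarith)
      have h7 : K * x ≤ K * T := by nlinarith
      exact mul_le_mul h7 h4 h2.le (by positivity)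
    have h5 : ε / K * (Real.exp (K*x) - 1) ≤ ε / K * (K * T * Real.exp (K*T)) :=
      mul_le_mul_of_nonneg_left (le_trans key hxe) (by positivity)
    have h6 : ε / K * (K * T * Real.exp (K*T)) = ε * T * Real.exp (K*T) := by
      field_simp
    linarith [h5, h6.le]

set_option maxHeartbeats 1600000 in
theorem stmt_17 {E : Type*} [NormedAddCommGroup E] [NormedSpace ℝ E]
    (L b Pbar R T T0 q : ℝ) (hT0 : 0 < T0) (hT : 0 < T)
    (f : E → E) (hf : LipschitzWith (Real.toNNReal L) f)
    (B : E →L[ℝ] E) (hB : ‖B‖ ≤ b)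
    (p : ℝ → ℝ) (hp : ∀ t, |p t| ≤ Pbar) (hper : Function.Periodic p T0)
    (hmean : (1 / T0) * ∫ τ in (0:ℝ)..T0, p τ = q)
    (x : ℝ → E)
    (hx : ∀ t ∈ Set.Icc (0:ℝ) T, HasDerivAt x (f (x t) + q • B (x t)) t)
    (hxR : ∀ t ∈ Set.Icc (0:ℝ) T, ‖x t‖ ≤ R) :
    ∃ C > (0:ℝ), ∀ lam > (0:ℝ), ∀ xl : ℝ → E, xl 0 = x 0 →
      (∀ t ∈ Set.Icc (0:ℝ) T, HasDerivAt xl (f (xl t) + p (t / lam) • B (xl t)) t) →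
      (∀ t ∈ Set.Icc (0:ℝ) T, ‖xl t‖ ≤ R) →
      ∀ t ∈ Set.Icc (0:ℝ) T, ‖xl t - x t‖ ≤ C * lam := by
  classical
  have hTle : (0:ℝ) ≤ T := hT.le
  have hP0 : 0 ≤ Pbar := le_trans (abs_nonneg _) (hp 0)
  have hb0 : 0 ≤ b := le_trans (norm_nonneg B) hB
  have hR0 : 0 ≤ R := le_trans (norm_nonneg _) (hxR 0 ⟨le_refl 0, hTle⟩)
  set L' : ℝ := max L 0 with hL'def
  have hL'0 : 0 ≤ L' := le_max_right _ _
  have hfl : ∀ y z : E, ‖f y - f z‖ ≤ L' * ‖y - z‖ := by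
    intro y z
    have h := hf.dist_le_mul y z
    rwa [dist_eq_norm, dist_eq_norm, Real.coe_toNNReal'] at h
  have hq : |q| ≤ Pbar := by
    have h1 : ‖∫ τ in (0:ℝ)..T0, p τ‖ ≤ Pbar * |T0 - 0| :=
      intervalIntegral.norm_integral_le_of_norm_le_const (fun s _ => by
        rw [Real.norm_eq_abs]; exact hp s)
    rw [Real.norm_eq_abs, sub_zero, abs_of_pos hT0] at h1
    rw [← hmean, abs_mul, abs_of_pos (by positivity : (0:ℝ) < 1/T0)]
    calc 1/T0 * |∫ τ in (0:ℝ)..T0, p τ| ≤ 1/T0 * (Pbar * T0) := by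
          apply mul_le_mul_of_nonneg_left h1 (by positivity)
      _ = Pbar := by field_simp
  set M2 : ℝ := ‖f 0‖ + L' * R + Pbar * b * R with hM2def
  have hM20 : 0 ≤ M2 := by positivity
  set K : ℝ := L' + Pbar * b with hKdef
  have hK0 : 0 ≤ K := by positivity
  set E' : ℝ := b * M2 * T0 + b * R * T0 / T with hE'def
  have hE'0 : 0 ≤ E' := by positivity
  set CJ : ℝ := 2*Pbar*b*M2*T*T0 + 2*Pbar*b*R*T0 with hCJdef
  have hCJ0 : 0 ≤ CJ := by positivity
  have hexp0 : 0 < Real.exp (K*T) := Real.exp_pos _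
  have h2PET : 0 ≤ 2*Pbar*E'*T :=
    mul_nonneg (mul_nonneg (mul_nonneg (by norm_num) hP0) hE'0) hTle
  have hfac : 0 < 2*Pbar*E'*T + CJ + 1 := by linarith
  refine ⟨(2*Pbar*E'*T + CJ + 1) * Real.exp (K*T), mul_pos hfac hexp0, ?_⟩
  intro lam hlam xl hxl0 hxl hxlR t ht
  have hxlc : ContinuousOn xl (Set.Icc 0 T) :=
    fun s hs => ((hxl s hs).continuousAt).continuousWithinAt
  have hxc : ContinuousOn x (Set.Icc 0 T) :=
    fun s hs => ((hx s hs).continuousAt).continuousWithinAt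
  have hBle : ∀ y : E, ‖B y‖ ≤ b * ‖y‖ := fun y =>
    le_trans (B.le_opNorm y) (mul_le_mul_of_nonneg_right hB (norm_nonneg y))
  have hfn : ∀ y : E, ‖f y‖ ≤ ‖f 0‖ + L' * ‖y‖ := by
    intro y
    have hy : f 0 + (f y - f 0) = f y := by abel
    calc ‖f y‖ = ‖f 0 + (f y - f 0)‖ := by rw [hy]
      _ ≤ ‖f 0‖ + ‖f y - f 0‖ := norm_add_le _ _
      _ ≤ ‖f 0‖ + L' * ‖y - 0‖ := by linarith [hfl y 0]
      _ = ‖f 0‖ + L' * ‖y‖ := by rw [sub_zero]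
  have hBxlR : ∀ s ∈ Set.Icc (0:ℝ) T, ‖B (xl s)‖ ≤ b * R := fun s hs =>
    le_trans (hBle _) (mul_le_mul_of_nonneg_left (hxlR s hs) hb0)
  have hfb : ∀ s ∈ Set.Icc (0:ℝ) T, ‖f (xl s) + p (s/lam) • B (xl s)‖ ≤ M2 := by
    intro s hs
    have h1 : ‖f (xl s)‖ ≤ ‖f 0‖ + L' * R := by
      refine le_trans (hfn _) ?_
      have := mul_le_mul_of_nonneg_left (hxlR s hs) hL'0
      linarith
    have h2 : ‖p (s/lam) • B (xl s)‖ ≤ Pbar * (b * R) := by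
      rw [norm_smul, Real.norm_eq_abs]
      exact mul_le_mul (hp _) (hBxlR s hs) (norm_nonneg _) hP0
    refine le_trans (norm_add_le _ _) ?_
    rw [hM2def]; linarith
  have hxlLip : ∀ s1 ∈ Set.Icc (0:ℝ) T, ∀ s2 ∈ Set.Icc (0:ℝ) T,
      ‖xl s1 - xl s2‖ ≤ M2 * |s1 - s2| := by
    intro s1 h1 s2 h2
    have := Convex.norm_image_sub_le_of_norm_hasDerivWithin_le
      (f := xl) (f' := fun s => f (xl s) + p (s/lam) • B (xl s)) (s := Set.Icc 0 T)
      (fun s hs => (hxl s hs).hasDerivWithinAt) (fun s hs => hfb s hs) (convex_Icc 0 T) h2 h1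
    rwa [Real.norm_eq_abs] at this
  by_cases hZ : ∀ a : ℝ, 0 ≤ a → a + lam*T0 ≤ T →
      ∃ s, s ∈ Set.Icc a (a + lam*T0) ∧ B (xl s) = 0
  -- ### Case A : zeros of B∘xl are (lam*T0)-dense
  · have hBxl : ∀ s ∈ Set.Icc (0:ℝ) T, ‖B (xl s)‖ ≤ lam * E' := by
      intro s hs
      by_cases hcase : lam * T0 ≤ T
      · set a := min s (T - lam*T0) with hadef
        have ha0 : 0 ≤ a := le_min hs.1 (by linarith)
        have haT : a + lam*T0 ≤ T := by
          have := min_le_right s (T - lam*T0); linarith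
        obtain ⟨s0, hs0mem, hs0⟩ := hZ a ha0 haT
        have hs0T : s0 ∈ Set.Icc (0:ℝ) T :=
          ⟨le_trans ha0 hs0mem.1, le_trans hs0mem.2 haT⟩
        have hsa : a ≤ s := min_le_left _ _
        have hsb : s ≤ a + lam*T0 := by
          rcases le_total s (T - lam*T0) with h | h
          · have h5 : a = s := min_eq_left h
            have := mul_pos hlam hT0
            linarith
          · have : a = T - lam*T0 := min_eq_right h
            rw [this]; linarith [hs.2]
        have habs : |s - s0| ≤ lam * T0 := by
          rw [abs_sub_le_iff]
          constructor <;> linarith [hs0mem.1, hs0mem.2]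
        calc ‖B (xl s)‖ = ‖B (xl s - xl s0)‖ := by rw [map_sub, hs0, sub_zero]
          _ ≤ b * ‖xl s - xl s0‖ := hBle _
          _ ≤ b * (M2 * |s - s0|) :=
              mul_le_mul_of_nonneg_left (hxlLip s hs s0 hs0T) hb0
          _ ≤ b * (M2 * (lam * T0)) :=
              mul_le_mul_of_nonneg_left (mul_le_mul_of_nonneg_left habs hM20) hb0
          _ = lam * (b * M2 * T0) := by ring
          _ ≤ lam * E' := by
              apply mul_le_mul_of_nonneg_left _ hlam.le
              have hd : 0 ≤ b * R * T0 / T := by positivity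
              rw [hE'def]; linarith
      · push_neg at hcase
        have h1 : ‖B (xl s)‖ ≤ b * R := hBxlR s hs
        have h3 : b * R ≤ lam * (b * R * T0 / T) := by
          rw [show lam * (b * R * T0 / T) = (b * R) * (lam * T0) / T by ring, le_div_iff₀ hT]
          exact mul_le_mul_of_nonneg_left hcase.le (mul_nonneg hb0 hR0)
        have h4 : lam * (b * R * T0 / T) ≤ lam * E' := by
          apply mul_le_mul_of_nonneg_left _ hlam.le
          have hd : 0 ≤ b * M2 * T0 := by positivity
          rw [hE'def]; linarith
        exact le_trans h1 (le_trans h3 h4)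
    set g' : ℝ → E := fun s => (f (xl s) + p (s/lam) • B (xl s)) - (f (x s) + q • B (x s))
      with hg'def
    have hgron := norm_le_gronwallBound_of_norm_deriv_right_le
      (f := fun s => xl s - x s) (f' := g') (δ := 0) (K := K) (ε := lam * (2*Pbar*E'))
      (a := 0) (b := T) (hxlc.sub hxc)
      (fun s hs => (((hxl s (Set.Ico_subset_Icc_self hs)).sub
        (hx s (Set.Ico_subset_Icc_self hs))).hasDerivWithinAt))
      (by simp [hxl0]) ?_ t ht
    · have hgb : gronwallBound 0 K (lam * (2*Pbar*E')) (t - 0) ≤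
          (lam * (2*Pbar*E')) * T * Real.exp (K*T) := by
        rw [sub_zero]
        exact gron_aux hK0 (by positivity) ht.1 ht.2
      have hfin : (lam * (2*Pbar*E')) * T * Real.exp (K*T) ≤
          (2*Pbar*E'*T + CJ + 1) * Real.exp (K*T) * lam := by
        rw [show (lam * (2*Pbar*E')) * T * Real.exp (K*T)
            = (2*Pbar*E'*T) * Real.exp (K*T) * lam by ring]
        apply mul_le_mul_of_nonneg_right _ hlam.le
        apply mul_le_mul_of_nonneg_right _ hexp0.le
        linarith
      linarith [hgron, hgb]
    · intro s hs
      have hsI : s ∈ Set.Icc (0:ℝ) T := Set.Ico_subset_Icc_self hs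
      have hrw : g' s = (f (xl s) - f (x s)) +
          (q • (B (xl s) - B (x s)) + (p (s/lam) - q) • B (xl s)) := by
        simp only [hg'def]; module
      rw [hrw]
      have e1 : ‖f (xl s) - f (x s)‖ ≤ L' * ‖xl s - x s‖ := hfl _ _
      have e2 : ‖q • (B (xl s) - B (x s))‖ ≤ Pbar * (b * ‖xl s - x s‖) := by
        rw [norm_smul, Real.norm_eq_abs, ← map_sub]
        exact mul_le_mul hq (hBle _) (norm_nonneg _) hP0
      have hphi : ∀ u : ℝ, |p u - q| ≤ 2*Pbar := by
        intro u
        have h1 := hp u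
        have h2 := abs_sub (p u) q
        linarith
      have e3 : ‖(p (s/lam) - q) • B (xl s)‖ ≤ 2*Pbar * (lam * E') := by
        rw [norm_smul, Real.norm_eq_abs]
        exact mul_le_mul (hphi _) (hBxl s hsI) (norm_nonneg _) (by linarith)
      calc ‖(f (xl s) - f (x s)) + (q • (B (xl s) - B (x s)) + (p (s/lam) - q) • B (xl s))‖
          ≤ ‖f (xl s) - f (x s)‖ + (‖q • (B (xl s) - B (x s))‖ + ‖(p (s/lam) - q) • B (xl s)‖) :=
            by refine le_trans (norm_add_le _ _) ?_; have h9 := norm_add_le (q • (B (xl s) - B (x s))) ((p (s/lam) - q) • B (xl s)); linarith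
        _ ≤ K * ‖xl s - x s‖ + lam * (2*Pbar*E') := by
            rw [hKdef, add_mul]
            have : Pbar * b * ‖xl s - x s‖ = Pbar * (b * ‖xl s - x s‖) := by ring
            rw [this, show 2*Pbar * (lam * E') = lam * (2*Pbar*E') by ring] at *
            linarith
  -- ### Case B : B∘xl does not vanish on some full period; p is measurable
  · push_neg at hZ
    obtain ⟨a, ha0, haT, hnz⟩ := hZ
    have hphi : ∀ u : ℝ, |p u - q| ≤ 2*Pbar := by
      intro u
      have h1 := hp u
      have h2 := abs_sub (p u) q
      linarith
    -- embed into the completion so that Bochner integrals behave well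
    let J : E →L[ℝ] UniformSpace.Completion E := UniformSpace.Completion.toComplL
    have hJnorm : ∀ y : E, ‖J y‖ = ‖y‖ := fun y => by
      rw [show J y = ((y : UniformSpace.Completion E)) from
        congrFun UniformSpace.Completion.coe_toComplL y]
      exact UniformSpace.Completion.norm_coe y
    -- clamped versions of xl and x
    set clamp : ℝ → ℝ := fun s => min (max s 0) T with hclampdef
    have hclampc : Continuous clamp := (continuous_id.max continuous_const).min continuous_const
    have hclampmem : ∀ s, clamp s ∈ Set.Icc (0:ℝ) T := fun s =>
      ⟨le_min (le_max_right s 0) hTle, min_le_right _ _⟩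
    have hclampeq : ∀ s ∈ Set.Icc (0:ℝ) T, clamp s = s := by
      intro s hs
      rw [hclampdef]
      simp only
      rw [max_eq_left hs.1, min_eq_left hs.2]
    set xle : ℝ → E := fun s => xl (clamp s) with hxledef
    set xe : ℝ → E := fun s => x (clamp s) with hxedef
    have hxlec : Continuous xle := hxlc.comp_continuous hclampc hclampmem
    have hxec : Continuous xe := hxc.comp_continuous hclampc hclampmem
    have hxleeq : ∀ s ∈ Set.Icc (0:ℝ) T, xle s = xl s := fun s hs => by
      rw [hxledef]; simp only; rw [hclampeq s hs]
    have hxeeq : ∀ s ∈ Set.Icc (0:ℝ) T, xe s = x s := fun s hs => by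
      rw [hxedef]; simp only; rw [hclampeq s hs]
    have hxleR : ∀ s, ‖xle s‖ ≤ R := fun s => hxlR _ (hclampmem s)
    -- measurability of p
    set D : ℝ → UniformSpace.Completion E :=
      fun s => deriv (fun w => J (xl w)) s - J (f (xle s)) with hDdef
    set vb : ℝ → UniformSpace.Completion E := fun s => J (B (xle s)) with hvbdef
    have hvbc : Continuous vb := J.continuous.comp (B.continuous.comp hxlec)
    have hDsm : StronglyMeasurable D :=
      (stronglyMeasurable_deriv _).sub
        ((J.continuous.comp (hf.continuous.comp hxlec)).stronglyMeasurable)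
    have hDval : ∀ s ∈ Set.Icc (0:ℝ) T, D s = p (s/lam) • vb s := by
      intro s hs
      have h1 : HasDerivAt (fun w => J (xl w)) (J (f (xl s) + p (s/lam) • B (xl s))) s := by
        have := J.hasFDerivAt.comp_hasDerivAt s (hxl s hs)
        exact this
      rw [hDdef]
      simp only
      rw [h1.deriv, hxleeq s hs, hvbdef]
      simp only
      rw [hxleeq s hs, map_add, _root_.map_smul, add_sub_cancel_left]
    set cc : ℝ → ℝ := fun s => ‖D s‖ / ‖vb s‖ with hccdef
    have hccm : Measurable cc := (hDsm.norm.measurable).div (hvbc.norm.measurable)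
    set ww : ℝ → ℝ := fun s => ‖D s - cc s • vb s‖ with hwwdef
    have hwwm : Measurable ww :=
      ((hDsm.sub (hccm.stronglyMeasurable.smul hvbc.stronglyMeasurable)).norm).measurable
    set r : ℝ → ℝ := fun s => if ww s = 0 then cc s else -cc s with hrdef
    have hrm : Measurable r := by
      apply Measurable.ite _ hccm hccm.neg
      exact hwwm (measurableSet_singleton 0)
    have hr : ∀ s ∈ Set.Icc a (a + lam*T0), r s = p (s/lam) := by
      intro s hs
      have hsT : s ∈ Set.Icc (0:ℝ) T := ⟨le_trans ha0 hs.1, le_trans hs.2 haT⟩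
      have hvne : vb s ≠ 0 := by
        intro h0
        apply hnz s hs
        have hn0 : ‖B (xl s)‖ = 0 := by
          rw [← hJnorm (B (xl s)), show J (B (xl s)) = vb s from by
            rw [hvbdef]; simp only; rw [hxleeq s hsT], h0, norm_zero]
        exact norm_eq_zero.1 hn0
      have hDs : D s = p (s/lam) • vb s := hDval s hsT
      have hvpos : 0 < ‖vb s‖ := norm_pos_iff.2 hvne
      have hcs : cc s = |p (s/lam)| := by
        rw [hccdef]
        simp only
        rw [hDs, norm_smul, Real.norm_eq_abs]
        field_simp
      by_cases hsign : 0 ≤ p (s/lam)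
      · have hw0 : ww s = 0 := by
          rw [hwwdef]; simp only
          rw [hDs, hcs, abs_of_nonneg hsign, sub_self, norm_zero]
        rw [hrdef]; simp only
        rw [if_pos hw0, hcs, abs_of_nonneg hsign]
      · push_neg at hsign
        have hwne : ww s ≠ 0 := by
          rw [hwwdef]; simp only
          rw [hDs, hcs, abs_of_neg hsign, ← sub_smul]
          rw [norm_smul, Real.norm_eq_abs]
          intro hcontra
          rcases mul_eq_zero.1 hcontra with h | h
          · have : p (s/lam) - -p (s/lam) = 2 * p (s/lam) := by ring
            rw [this] at h
            have := abs_eq_zero.1 h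
            linarith [hsign]
          · exact hvne (norm_eq_zero.1 h)
        rw [hrdef]; simp only
        rw [if_neg hwne, hcs, abs_of_neg hsign, neg_neg]
    have hpm : Measurable p := by
      have hmapm : Measurable (fun τ : ℝ => lam * (τ - (⌊(τ - a/lam)/T0⌋ : ℝ) * T0)) := by
        apply Measurable.const_mul
        apply Measurable.sub measurable_id
        apply Measurable.mul_const
        exact (measurable_from_top.comp (((measurable_id.sub_const _).div_const _).floor))
      have hkey : ∀ τ : ℝ, p τ = r (lam * (τ - (⌊(τ - a/lam)/T0⌋ : ℝ) * T0)) := by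
        intro τ
        set k : ℤ := ⌊(τ - a/lam)/T0⌋ with hk
        have h1 : 0 ≤ (τ - a/lam) - (k:ℝ) * T0 := by
          rw [hk]; exact Int.sub_floor_div_mul_nonneg _ hT0
        have h2 : (τ - a/lam) - (k:ℝ) * T0 < T0 := by
          rw [hk]; exact Int.sub_floor_div_mul_lt _ hT0
        have hmem : lam * (τ - (k:ℝ)*T0) ∈ Set.Icc a (a + lam*T0) := by
          constructor
          · have h3 : a/lam ≤ τ - (k:ℝ)*T0 := by linarith
            calc a = lam * (a/lam) := by field_simp
              _ ≤ lam * (τ - (k:ℝ)*T0) := mul_le_mul_of_nonneg_left h3 hlam.le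
          · have h3 : τ - (k:ℝ)*T0 ≤ a/lam + T0 := by linarith
            calc lam * (τ - (k:ℝ)*T0) ≤ lam * (a/lam + T0) :=
                  mul_le_mul_of_nonneg_left h3 hlam.le
              _ = a + lam*T0 := by field_simp
        rw [hr _ hmem, mul_div_cancel_left₀ _ hlam.ne']
        exact (hper.sub_int_mul_eq k).symm
      rw [funext hkey]
      exact hrm.comp hmapm
    -- basic integrands
    have hPm : Measurable (fun s : ℝ => p (s/lam)) := hpm.comp (measurable_id.div_const lam)
    have hmean' : ∫ τ in (0:ℝ)..T0, p τ = q * T0 := by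
      field_simp at hmean
      linarith
    set c0 : ℝ := lam * T0 with hc0def
    have hc0 : 0 < c0 := mul_pos hlam hT0
    set φ : ℝ → ℝ := fun s => p (s/lam) - q with hφdef
    have hφm : Measurable φ := hPm.sub measurable_const
    have hφb : ∀ s, |φ s| ≤ 2*Pbar := fun s => hphi _
    have hφint : ∀ u v : ℝ, IntervalIntegrable φ volume u v := by
      intro u v
      rw [intervalIntegrable_iff]
      apply MeasureTheory.Measure.integrableOn_of_bounded (M := 2*Pbar)
        (measure_Ioc_lt_top).ne hφm.aestronglyMeasurable
      exact Filter.Eventually.of_forall fun s => by rw [Real.norm_eq_abs]; exact hφb s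
    have hPint : ∀ u v : ℝ, IntervalIntegrable (fun s : ℝ => p (s/lam)) volume u v := by
      intro u v
      rw [intervalIntegrable_iff]
      apply MeasureTheory.Measure.integrableOn_of_bounded (M := Pbar)
        (measure_Ioc_lt_top).ne hPm.aestronglyMeasurable
      exact Filter.Eventually.of_forall fun s => by rw [Real.norm_eq_abs]; exact hp _
    have hvbR : ∀ s, ‖vb s‖ ≤ b * R := fun s => by
      rw [hvbdef]
      simp only
      rw [hJnorm]
      exact le_trans (hBle _) (mul_le_mul_of_nonneg_left (hxleR s) hb0)
    have hvbLip : ∀ s1 ∈ Set.Icc (0:ℝ) T, ∀ s2 ∈ Set.Icc (0:ℝ) T,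
        ‖vb s1 - vb s2‖ ≤ b * (M2 * |s1 - s2|) := by
      intro s1 h1 s2 h2
      rw [hvbdef]
      simp only
      rw [hxleeq s1 h1, hxleeq s2 h2, ← map_sub, hJnorm, ← map_sub]
      refine le_trans (hBle _) (mul_le_mul_of_nonneg_left ?_ hb0)
      exact hxlLip s1 h1 s2 h2
    set G2 : ℝ → UniformSpace.Completion E := fun s => φ s • vb s with hG2def
    have hG2sm : StronglyMeasurable G2 := hφm.stronglyMeasurable.smul hvbc.stronglyMeasurable
    have hG2b : ∀ s, ‖G2 s‖ ≤ 2*Pbar*(b*R) := by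
      intro s
      rw [hG2def]
      simp only
      rw [norm_smul, Real.norm_eq_abs]
      exact mul_le_mul (hφb s) (hvbR s) (norm_nonneg _) (by linarith)
    have hG2int : ∀ u v : ℝ, IntervalIntegrable G2 volume u v := by
      intro u v
      rw [intervalIntegrable_iff]
      apply MeasureTheory.Measure.integrableOn_of_bounded (M := 2*Pbar*(b*R))
        (measure_Ioc_lt_top).ne hG2sm.aestronglyMeasurable
      exact Filter.Eventually.of_forall fun s => hG2b s
    set G1 : ℝ → UniformSpace.Completion E := fun s =>
      (J (f (xle s)) - J (f (xe s))) + q • (J (B (xle s)) - J (B (xe s))) with hG1def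
    have hG1c : Continuous G1 := by
      apply Continuous.add
      · exact (J.continuous.comp (hf.continuous.comp hxlec)).sub
          (J.continuous.comp (hf.continuous.comp hxec))
      · exact ((J.continuous.comp (B.continuous.comp hxlec)).sub
          (J.continuous.comp (B.continuous.comp hxec))).const_smul q
    have hG1int : ∀ u v : ℝ, IntervalIntegrable G1 volume u v := fun u v =>
      hG1c.intervalIntegrable u v
    have hG1b : ∀ s ∈ Set.Icc (0:ℝ) T, ‖G1 s‖ ≤ K * ‖xl s - x s‖ := by
      intro s hs
      rw [hG1def]
      simp only
      rw [hxleeq s hs, hxeeq s hs]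
      have e1 : ‖J (f (xl s)) - J (f (x s))‖ ≤ L' * ‖xl s - x s‖ := by
        rw [← map_sub, hJnorm]; exact hfl _ _
      have e2 : ‖q • (J (B (xl s)) - J (B (x s)))‖ ≤ Pbar * (b * ‖xl s - x s‖) := by
        rw [norm_smul, Real.norm_eq_abs, ← map_sub, hJnorm, ← map_sub]
        exact mul_le_mul hq (hBle _) (norm_nonneg _) hP0
      refine le_trans (norm_add_le _ _) ?_
      rw [hKdef, add_mul]
      have h3 : Pbar * b * ‖xl s - x s‖ = Pbar * (b * ‖xl s - x s‖) := by ring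
      rw [h3]
      linarith
    -- fundamental theorem of calculus
    have hFTC : ∀ w ∈ Set.Icc (0:ℝ) T,
        (∫ s in (0:ℝ)..w, G1 s) + (∫ s in (0:ℝ)..w, G2 s) = J (xl w) - J (x w) := by
      intro w hw
      have hderiv : ∀ s ∈ Set.uIcc (0:ℝ) w,
          HasDerivAt (fun u => J (xl u) - J (x u)) (G1 s + G2 s) s := by
        intro s hsu
        rw [Set.uIcc_of_le hw.1] at hsu
        have hsI : s ∈ Set.Icc (0:ℝ) T := ⟨hsu.1, le_trans hsu.2 hw.2⟩
        have h1 : HasDerivAt (fun u => J (xl u)) (J (f (xl s) + p (s/lam) • B (xl s))) s := by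
          have := J.hasFDerivAt.comp_hasDerivAt s (hxl s hsI)
          exact this
        have h2 : HasDerivAt (fun u => J (x u)) (J (f (x s) + q • B (x s))) s := by
          have := J.hasFDerivAt.comp_hasDerivAt s (hx s hsI)
          exact this
        have h3 := h1.sub h2
        have heq : J (f (xl s) + p (s/lam) • B (xl s)) - J (f (x s) + q • B (x s))
            = G1 s + G2 s := by
          rw [hG1def, hG2def]
          simp only
          rw [hxleeq s hsI, hxeeq s hsI, hφdef, hvbdef]
          simp only
          rw [hxleeq s hsI, map_add, map_add, _root_.map_smul, _root_.map_smul]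
          module
        rwa [heq] at h3
      have h4 := intervalIntegral.integral_eq_sub_of_hasDerivAt hderiv
        ((hG1int 0 w).add (hG2int 0 w))
      rw [intervalIntegral.integral_add (hG1int 0 w) (hG2int 0 w)] at h4
      rw [h4, hxl0, sub_self, sub_zero]
    -- the averaged oscillatory integral is O(lam)
    have hper0 : ∀ k : ℕ, (∫ s in ((k:ℝ)*c0)..(((k:ℝ)+1)*c0), φ s) = 0 := by
      intro k
      have e1 : ((k:ℝ)*c0)/lam = (k:ℝ)*T0 := by
        rw [hc0def]; field_simp
      have e2 : (((k:ℝ)+1)*c0)/lam = (k:ℝ)*T0 + T0 := by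
        rw [hc0def]; field_simp
      rw [hφdef]
      simp only
      rw [intervalIntegral.integral_sub (hPint _ _) intervalIntegrable_const]
      rw [intervalIntegral.integral_comp_div (f := p) hlam.ne', e1, e2,
        hper.intervalIntegral_add_eq ((k:ℝ)*T0) 0, zero_add, hmean',
        intervalIntegral.integral_const, smul_eq_mul, smul_eq_mul, hc0def]
      ring
    have hpiece : ∀ k : ℕ, ((k:ℝ)+1)*c0 ≤ T →
        ‖∫ s in ((k:ℝ)*c0)..(((k:ℝ)+1)*c0), G2 s‖ ≤ 2*Pbar*(b*(M2*c0))*c0 := by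
      intro k hkT
      have hk0 : (0:ℝ) ≤ (k:ℝ)*c0 := mul_nonneg (Nat.cast_nonneg k) hc0.le
      have hkk : (k:ℝ)*c0 ≤ ((k:ℝ)+1)*c0 := by nlinarith
      have hkIcc : (k:ℝ)*c0 ∈ Set.Icc (0:ℝ) T := ⟨hk0, le_trans (by linarith) hkT⟩
      have hsplit : G2 = fun s => (φ s • (vb s - vb ((k:ℝ)*c0))) + φ s • vb ((k:ℝ)*c0) := by
        funext s
        rw [hG2def]
        simp only
        rw [smul_sub]
        abel
      have hint2 : IntervalIntegrable (fun s => φ s • vb ((k:ℝ)*c0)) volume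
          ((k:ℝ)*c0) (((k:ℝ)+1)*c0) := by
        rw [intervalIntegrable_iff]
        apply MeasureTheory.Measure.integrableOn_of_bounded (M := 2*Pbar*‖vb ((k:ℝ)*c0)‖)
          (measure_Ioc_lt_top).ne
          (hφm.stronglyMeasurable.smul stronglyMeasurable_const).aestronglyMeasurable
        apply Filter.Eventually.of_forall
        intro s
        show ‖φ s • vb ((k:ℝ)*c0)‖ ≤ _
        rw [norm_smul, Real.norm_eq_abs]
        exact mul_le_mul_of_nonneg_right (hφb s) (norm_nonneg _)
      have hint1 : IntervalIntegrable (fun s => φ s • (vb s - vb ((k:ℝ)*c0))) volume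
          ((k:ℝ)*c0) (((k:ℝ)+1)*c0) := by
        have he : (fun s => φ s • (vb s - vb ((k:ℝ)*c0)))
            = fun s => G2 s - φ s • vb ((k:ℝ)*c0) := by
          funext s
          rw [hG2def]
          simp only
          rw [smul_sub]
        rw [he]
        exact (hG2int _ _).sub hint2
      rw [hsplit, intervalIntegral.integral_add hint1 hint2,
        intervalIntegral.integral_smul_const, hper0 k, zero_smul, add_zero]
      refine le_trans (intervalIntegral.norm_integral_le_of_norm_le_const
        (C := 2*Pbar*(b*(M2*c0))) ?_) ?_
      · intro s hsI
        rw [Set.uIoc_of_le hkk] at hsI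
        have hsT : s ∈ Set.Icc (0:ℝ) T := ⟨le_trans hk0 hsI.1.le, le_trans hsI.2 hkT⟩
        rw [norm_smul, Real.norm_eq_abs]
        have hv : ‖vb s - vb ((k:ℝ)*c0)‖ ≤ b*(M2*c0) := by
          refine le_trans (hvbLip s hsT _ hkIcc) ?_
          have habs : |s - (k:ℝ)*c0| ≤ c0 := by
            rw [abs_of_nonneg (by linarith [hsI.1] : (0:ℝ) ≤ s - (k:ℝ)*c0)]
            have := hsI.2
            linarith
          exact mul_le_mul_of_nonneg_left (mul_le_mul_of_nonneg_left habs hM20) hb0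
        exact mul_le_mul (hφb s) hv (norm_nonneg _) (by linarith)
      · rw [show ((k:ℝ)+1)*c0 - (k:ℝ)*c0 = c0 by ring, abs_of_pos hc0]
    have hJb : ∀ w ∈ Set.Icc (0:ℝ) T, ‖∫ s in (0:ℝ)..w, G2 s‖ ≤ lam * CJ := by
      intro w hw
      set n : ℕ := ⌊w / c0⌋₊ with hn
      have hnc : (n:ℝ)*c0 ≤ w := by
        have h5 := Nat.floor_le (div_nonneg hw.1 hc0.le)
        calc (n:ℝ)*c0 ≤ (w/c0)*c0 := mul_le_mul_of_nonneg_right (by rw [hn]; exact h5) hc0.le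
          _ = w := by field_simp
      have hwlt : w < ((n:ℝ)+1)*c0 := by
        have h5 := Nat.lt_floor_add_one (w / c0)
        calc w = (w/c0)*c0 := by field_simp
          _ < ((n:ℝ)+1)*c0 := by
              apply mul_lt_mul_of_pos_right _ hc0
              rw [hn]
              exact_mod_cast h5
      have hsum : ∑ k ∈ Finset.range n, (∫ s in ((k:ℝ)*c0)..(((k:ℝ)+1)*c0), G2 s)
          = ∫ s in (0:ℝ)..((n:ℝ)*c0), G2 s := by
        have h6 := intervalIntegral.sum_integral_adjacent_intervals
          (a := fun k : ℕ => (k:ℝ)*c0) (n := n) (f := G2) (μ := volume)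
          (fun k _ => hG2int _ _)
        simp only [Nat.cast_zero, zero_mul] at h6
        rw [← h6]
        apply Finset.sum_congr rfl
        intro k _
        congr 1
        push_cast
        ring
      have hsplit2 : (∫ s in (0:ℝ)..w, G2 s)
          = (∫ s in (0:ℝ)..((n:ℝ)*c0), G2 s) + ∫ s in ((n:ℝ)*c0)..w, G2 s :=
        (intervalIntegral.integral_add_adjacent_intervals (hG2int _ _) (hG2int _ _)).symm
      have hmain : ‖∫ s in (0:ℝ)..((n:ℝ)*c0), G2 s‖ ≤ 2*Pbar*(b*(M2*c0))*((n:ℝ)*c0) := by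
        rw [← hsum]
        refine le_trans (norm_sum_le _ _) ?_
        have h7 : ∀ k ∈ Finset.range n, ‖∫ s in ((k:ℝ)*c0)..(((k:ℝ)+1)*c0), G2 s‖
            ≤ 2*Pbar*(b*(M2*c0))*c0 := by
          intro k hk
          apply hpiece
          have hkn : (k:ℝ)+1 ≤ (n:ℝ) := by
            have := Finset.mem_range.1 hk
            exact_mod_cast Nat.succ_le_of_lt this
          calc ((k:ℝ)+1)*c0 ≤ (n:ℝ)*c0 := mul_le_mul_of_nonneg_right hkn hc0.le
            _ ≤ w := hnc
            _ ≤ T := hw.2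
        refine le_trans (Finset.sum_le_sum h7) ?_
        rw [Finset.sum_const, Finset.card_range, nsmul_eq_mul]
        rw [show (n:ℝ) * (2*Pbar*(b*(M2*c0))*c0) = 2*Pbar*(b*(M2*c0))*((n:ℝ)*c0) by ring]
      have htail : ‖∫ s in ((n:ℝ)*c0)..w, G2 s‖ ≤ 2*Pbar*(b*R)*c0 := by
        refine le_trans (intervalIntegral.norm_integral_le_of_norm_le_const
          (C := 2*Pbar*(b*R)) (fun s _ => hG2b s)) ?_
        rw [abs_of_nonneg (by linarith : (0:ℝ) ≤ w - (n:ℝ)*c0)]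
        have h8 : w - (n:ℝ)*c0 ≤ c0 := by linarith
        apply mul_le_mul_of_nonneg_left h8
        have h9 : (0:ℝ) ≤ b*R := mul_nonneg hb0 hR0
        positivity
      have hnn : (n:ℝ)*c0 ≤ T := le_trans hnc hw.2
      have hfin1 : 2*Pbar*(b*(M2*c0))*((n:ℝ)*c0) ≤ 2*Pbar*b*M2*T*T0*lam := by
        rw [show 2*Pbar*(b*(M2*c0))*((n:ℝ)*c0) = (2*Pbar*b*M2)*(((n:ℝ)*c0)*c0) by ring,
          show 2*Pbar*b*M2*T*T0*lam = (2*Pbar*b*M2)*(T*c0) by rw [hc0def]; ring]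
        apply mul_le_mul_of_nonneg_left _ (by positivity)
        exact mul_le_mul_of_nonneg_right hnn hc0.le
      have hfin2 : 2*Pbar*(b*R)*c0 = 2*Pbar*b*R*T0*lam := by
        rw [hc0def]; ring
      calc ‖∫ s in (0:ℝ)..w, G2 s‖
          ≤ ‖∫ s in (0:ℝ)..((n:ℝ)*c0), G2 s‖ + ‖∫ s in ((n:ℝ)*c0)..w, G2 s‖ := by
            rw [hsplit2]; exact norm_add_le _ _
        _ ≤ 2*Pbar*b*M2*T*T0*lam + 2*Pbar*b*R*T0*lam := by
            have := le_trans hmain hfin1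
            have := le_trans htail hfin2.le
            linarith
        _ = lam * CJ := by rw [hCJdef]; ring
    -- integral form of Gronwall's inequality
    set u : ℝ → ℝ := fun s => ‖xle s - xe s‖ with hudef
    have huc : Continuous u := (hxlec.sub hxec).norm
    have hueq : ∀ s ∈ Set.Icc (0:ℝ) T, u s = ‖xl s - x s‖ := by
      intro s hs
      rw [hudef]
      simp only
      rw [hxleeq s hs, hxeeq s hs]
    have hu0 : ∀ s, 0 ≤ u s := fun s => norm_nonneg _
    have hkey2 : ∀ w ∈ Set.Icc (0:ℝ) T, u w ≤ lam*CJ + K * ∫ s in (0:ℝ)..w, u s := by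
      intro w hw
      have h1 : u w = ‖(∫ s in (0:ℝ)..w, G1 s) + (∫ s in (0:ℝ)..w, G2 s)‖ := by
        rw [hFTC w hw, ← map_sub, hJnorm, hueq w hw]
      have h2 : ‖∫ s in (0:ℝ)..w, G1 s‖ ≤ K * ∫ s in (0:ℝ)..w, u s := by
        refine le_trans (intervalIntegral.norm_integral_le_integral_norm hw.1) ?_
        rw [← intervalIntegral.integral_const_mul]
        apply intervalIntegral.integral_mono_on hw.1
          (hG1c.norm.intervalIntegrable _ _) ((continuous_const.mul huc).intervalIntegrable _ _)
        intro s hs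
        have hsT : s ∈ Set.Icc (0:ℝ) T := ⟨hs.1, le_trans hs.2 hw.2⟩
        show ‖G1 s‖ ≤ K * u s
        rw [hueq s hsT]
        exact hG1b s hsT
      calc u w ≤ ‖∫ s in (0:ℝ)..w, G1 s‖ + ‖∫ s in (0:ℝ)..w, G2 s‖ := by
            rw [h1]; exact norm_add_le _ _
        _ ≤ lam*CJ + K * ∫ s in (0:ℝ)..w, u s := by
            have := hJb w hw
            linarith
    set U : ℝ → ℝ := fun w => lam*CJ + K * ∫ s in (0:ℝ)..w, u s with hUdef
    have hU' : ∀ w : ℝ, HasDerivAt U (K * u w) w := by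
      intro w
      have h := intervalIntegral.integral_hasDerivAt_right (huc.intervalIntegrable 0 w)
        (huc.stronglyMeasurableAtFilter volume (nhds w)) huc.continuousAt
      exact (h.const_mul K).const_add (lam*CJ)
    have hUc : Continuous U := continuous_iff_continuousAt.2 fun w => (hU' w).continuousAt
    have hUpos : ∀ w ∈ Set.Icc (0:ℝ) T, 0 ≤ U w := by
      intro w hw
      rw [hUdef]
      simp only
      have h1 : 0 ≤ ∫ s in (0:ℝ)..w, u s :=
        intervalIntegral.integral_nonneg hw.1 (fun s _ => hu0 s)
      have h2 : 0 ≤ lam * CJ := mul_nonneg hlam.le hCJ0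
      nlinarith
    have hgronB := norm_le_gronwallBound_of_norm_deriv_right_le (f := U)
      (f' := fun w => K * u w) (δ := lam*CJ) (K := K) (ε := 0) (a := 0) (b := T)
      hUc.continuousOn (fun w _ => (hU' w).hasDerivWithinAt) ?_ ?_ t ht
    · have h1 : u t ≤ U t := hkey2 t ht
      have h2 : U t ≤ ‖U t‖ := le_abs_self _
      have h3 : gronwallBound (lam*CJ) K 0 (t - 0) = (lam*CJ) * Real.exp (K * (t - 0)) :=
        gronwallBound_ε0 _ _ _
      have h4 : (lam*CJ) * Real.exp (K * (t - 0)) ≤ (lam*CJ) * Real.exp (K * T) := by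
        apply mul_le_mul_of_nonneg_left _ (mul_nonneg hlam.le hCJ0)
        apply Real.exp_le_exp.2
        apply mul_le_mul_of_nonneg_left _ hK0
        linarith [ht.2]
      have h5 : (lam*CJ) * Real.exp (K * T) ≤ (2*Pbar*E'*T + CJ + 1) * Real.exp (K*T) * lam := by
        rw [show (lam*CJ) * Real.exp (K * T) = CJ * Real.exp (K*T) * lam by ring]
        apply mul_le_mul_of_nonneg_right _ hlam.le
        apply mul_le_mul_of_nonneg_right _ hexp0.le
        linarith
      have h6 : ‖xl t - x t‖ = u t := (hueq t ht).symm
      rw [h6]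
      calc u t ≤ ‖U t‖ := le_trans h1 h2
        _ ≤ gronwallBound (lam*CJ) K 0 (t - 0) := hgronB
        _ ≤ (2*Pbar*E'*T + CJ + 1) * Real.exp (K*T) * lam := by
            rw [h3]; exact le_trans h4 h5
    · rw [hUdef]
      simp only
      rw [intervalIntegral.integral_same, mul_zero, add_zero, Real.norm_eq_abs,
        abs_of_nonneg (mul_nonneg hlam.le hCJ0)]
    · intro w hw
      have hwI : w ∈ Set.Icc (0:ℝ) T := Set.Ico_subset_Icc_self hw
      have h1 : u w ≤ U w := hkey2 w hwI
      rw [Real.norm_eq_abs, abs_of_nonneg (mul_nonneg hK0 (hu0 w)), Real.norm_eq_abs,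
        abs_of_nonneg (hUpos w hwI)]
      have h2 : K * u w ≤ K * U w := mul_le_mul_of_nonneg_left h1 hK0
      linarith
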